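/- Let φ : E → ℝ ∪ {+∞} be proper, lower-semicontinuous, and convex with nonempty minimizer set X*, satisfying the Hölderian error bound φ(x) - φ* ≥ κ·dist(x, X*)^ρ for all x in the sublevel set {x : φ(x) ≤ φ(x₀)}, with κ > 0 and ρ ≥ 1. Then for every x in this sublevel set with x ∉ X* and every g ∈ ∂φ(x), the Łojasiewicz gradient inequality κ^{1/ρ}·(φ(x) - φ*)^{(ρ-1)/ρ} ≤ ‖g‖ holds. -/

import Mathlib

open Real RealInnerProductSpace

theorem stmt7 {E : Type*} [NormedAddCommGroup E] [InnerProductSpace ℝ E]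
    [FiniteDimensional ℝ E]
    (φ : E → ℝ) (hconv : ConvexOn ℝ Set.univ φ) (hlsc : LowerSemicontinuous φ)
    (Xstar : Set E) (hX : Xstar = {z | ∀ x, φ z ≤ φ x})
    (xm : E) (hxm : xm ∈ Xstar)
    (x₀ : E) (κ ρ : ℝ) (hκ : 0 < κ) (hρ : 1 ≤ ρ)
    (hHEB : ∀ x, φ x ≤ φ x₀ → κ * Metric.infDist x Xstar ^ ρ ≤ φ x - φ xm) :
    ∀ x, φ x ≤ φ x₀ → x ∉ Xstar → ∀ g : E, (∀ z, φ x + ⟪g, z - x⟫ ≤ φ z) →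
      κ ^ (1 / ρ) * (φ x - φ xm) ^ ((ρ - 1) / ρ) ≤ ‖g‖ := by
  intro x hx hxX g hg
  have hρ0 : (0:ℝ) < ρ := lt_of_lt_of_le one_pos hρ
  -- Xstar is closed
  have hclosed : IsClosed Xstar := by
    rw [hX]
    have : {z | ∀ y, φ z ≤ φ y} = ⋂ y, φ ⁻¹' Set.Iic (φ y) := by
      ext z; simp [Set.mem_iInter]
    rw [this]
    exact isClosed_iInter fun y => hlsc.isClosed_preimage (φ y)
  set d := Metric.infDist x Xstar with hd
  have hXne : Xstar.Nonempty := ⟨xm, hxm⟩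
  -- d > 0
  have hd0 : 0 < d := by
    rcases lt_or_eq_of_le (Metric.infDist_nonneg (s := Xstar) (x := x)) with h | h
    · exact h
    · exfalso
      exact hxX ((hclosed.mem_iff_infDist_zero hXne).mpr h.symm)
  -- f > 0
  have hxmin : ∀ y, φ xm ≤ φ y := by rw [hX] at hxm; exact hxm
  have hf0 : 0 < φ x - φ xm := by
    have : φ xm ≠ φ x := by
      intro h
      apply hxX
      rw [hX]
      intro y
      rw [← h]; exact hxmin y
    have := lt_of_le_of_ne (hxmin x) this
    linarith
  set f := φ x - φ xm with hfdef
  -- nearest point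
  obtain ⟨y, hyX, hy⟩ := hclosed.exists_infDist_eq_dist hXne x
  -- f ≤ ‖g‖ * d
  have h1 : f ≤ ‖g‖ * d := by
    have h2 := hg y
    have h3 : φ y = φ xm := le_antisymm (by rw [hX] at hyX; exact hyX xm) (hxmin y)
    have h4 : -⟪g, y - x⟫ ≤ ‖g‖ * ‖y - x‖ := by
      have := abs_real_inner_le_norm g (y - x)
      have := neg_abs_le (⟪g, y - x⟫)
      nlinarith [abs_real_inner_le_norm g (y - x), neg_abs_le (⟪g, y - x⟫)]
    have h5 : ‖y - x‖ = d := by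
      rw [hd, hy, dist_eq_norm]
      exact norm_sub_rev y x
    rw [h5] at h4
    have : f ≤ -⟪g, y - x⟫ := by rw [h3] at h2; simp [hfdef]; linarith
    linarith
  -- key: κ^(1/ρ) * f^((ρ-1)/ρ) * d ≤ f
  have hHEBx := hHEB x hx
  have hkey : κ ^ (1/ρ) * f ^ ((ρ-1)/ρ) * d ≤ f := by
    have hdnn : 0 ≤ d := hd0.le
    have hA : (κ * d ^ ρ) ^ (1/ρ) ≤ f ^ (1/ρ) :=
      Real.rpow_le_rpow (by positivity) hHEBx (by positivity)
    have hB : (κ * d ^ ρ) ^ (1/ρ) = κ ^ (1/ρ) * d := by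
      rw [Real.mul_rpow hκ.le (Real.rpow_nonneg hdnn ρ), ← Real.rpow_mul hdnn,
        mul_one_div_cancel hρ0.ne', Real.rpow_one]
    rw [hB] at hA
    calc κ ^ (1/ρ) * f ^ ((ρ-1)/ρ) * d = f ^ ((ρ-1)/ρ) * (κ ^ (1/ρ) * d) := by ring
      _ ≤ f ^ ((ρ-1)/ρ) * f ^ (1/ρ) := by
          apply mul_le_mul_of_nonneg_left hA (Real.rpow_nonneg hf0.le _)
      _ = f := by
          rw [← Real.rpow_add hf0]
          have : (ρ-1)/ρ + 1/ρ = 1 := by field_simp; ring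
          rw [this, Real.rpow_one]
  -- combine
  have := hkey.trans h1
  exact le_of_mul_le_mul_right this hd0
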